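/- Let Q be a real symmetric positive semidefinite n×n matrix, b ∈ ℝⁿ, f(x) = ½⟨x, Qx⟩ − ⟨b, x⟩, and S a real symmetric positive semidefinite n×n matrix. Suppose x⁺ and y satisfy Qx⁺ − b + S(x⁺ − y) = 0. Then for every x ∈ ℝⁿ, f(x) − f(x⁺) ≥ ½⟨x⁺ − y, S(x⁺ − y)⟩ + ⟨y − x, S(x⁺ − y)⟩. -/

import Mathlib

open Matrix

theorem basic_descent_lemma {n : ℕ}
    (Q S : Matrix (Fin n) (Fin n) ℝ) (b : Fin n → ℝ)
    (hQ : Q.PosSemidef) (hS : S.PosSemidef)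
    (f : (Fin n → ℝ) → ℝ)
    (hf : ∀ x, f x = (1 / 2) * (x ⬝ᵥ Q *ᵥ x) - b ⬝ᵥ x)
    (xplus y : Fin n → ℝ)
    (hopt : Q *ᵥ xplus - b + S *ᵥ (xplus - y) = 0) :
    ∀ x : Fin n → ℝ,
      (1 / 2) * ((xplus - y) ⬝ᵥ S *ᵥ (xplus - y)) + (y - x) ⬝ᵥ S *ᵥ (xplus - y)
        ≤ f x - f xplus := by
  intro x
  have hb : b = Q *ᵥ xplus + S *ᵥ (xplus - y) := by
    linear_combination -hopt
  have htQ : Qᵀ = Q := by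
    have := hQ.1
    simpa [Matrix.IsHermitian, Matrix.conjTranspose_eq_transpose_of_trivial] using this
  have htS : Sᵀ = S := by
    have := hS.1
    simpa [Matrix.IsHermitian, Matrix.conjTranspose_eq_transpose_of_trivial] using this
  have hsym : ∀ u w : Fin n → ℝ, u ⬝ᵥ Q *ᵥ w = w ⬝ᵥ Q *ᵥ u := by
    intro u w
    rw [dotProduct_mulVec, ← mulVec_transpose, htQ, dotProduct_comm]
  have hsymS : ∀ u w : Fin n → ℝ, u ⬝ᵥ S *ᵥ w = w ⬝ᵥ S *ᵥ u := by
    intro u w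
    rw [dotProduct_mulVec, ← mulVec_transpose, htS, dotProduct_comm]
  have hQ0 : 0 ≤ (x - xplus) ⬝ᵥ Q *ᵥ (x - xplus) := by simpa using hQ.dotProduct_mulVec_nonneg (x - xplus)
  have hS0 : 0 ≤ (xplus - y) ⬝ᵥ S *ᵥ (xplus - y) := by simpa using hS.dotProduct_mulVec_nonneg (xplus - y)
  have hkey := hsym x xplus
  rw [hf, hf, hb]
  simp only [mulVec_sub, dotProduct_sub, sub_dotProduct, add_dotProduct,
    dotProduct_add] at *
  have h1 : (Q *ᵥ xplus) ⬝ᵥ x = xplus ⬝ᵥ Q *ᵥ x :=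
    (dotProduct_comm _ _).trans hkey
  have h2 : (Q *ᵥ xplus) ⬝ᵥ xplus = xplus ⬝ᵥ Q *ᵥ xplus := dotProduct_comm _ _
  have h5 : (S *ᵥ xplus) ⬝ᵥ x = x ⬝ᵥ S *ᵥ xplus := dotProduct_comm _ _
  have h6 : (S *ᵥ y) ⬝ᵥ x = x ⬝ᵥ S *ᵥ y := dotProduct_comm _ _
  have h7 : (S *ᵥ xplus) ⬝ᵥ xplus = xplus ⬝ᵥ S *ᵥ xplus := dotProduct_comm _ _
  have h8 : (S *ᵥ y) ⬝ᵥ xplus = xplus ⬝ᵥ S *ᵥ y := dotProduct_comm _ _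
  have h9 : y ⬝ᵥ S *ᵥ xplus = xplus ⬝ᵥ S *ᵥ y := hsymS _ _
  linarith
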